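/- Let (E,e) be a matrix factorization of w over S with a connection ∇, and set θ = [∇,e] = ∇ ∘ e − (1_Ω ⊗ e) ∘ ∇. Then for every q ≥ 1, (−1)^q (1_{Ω^{⊗q}} ⊗ e) ∘ θ^q − θ^q ∘ e = −B_{dw} ∘ θ^{q−1} as maps E → Ω^{⊗q} ⊗_S E, where θ^q denotes the q-fold iterate of θ via the extensions 1_{Ω^{⊗j}} ⊗ θ. -/

import Mathlib

set_option maxHeartbeats 1000000

open scoped TensorProduct
open PiTensorProduct
open scoped TensorProduct
open PiTensorProduct

lemma aux_insertNth_castSucc_snoc {α : Type*} {n : ℕ} (i : Fin (n + 1)) (a μ : α)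
    (ω : Fin n → α) :
    Fin.insertNth (Fin.castSucc i) a (Fin.snoc ω μ) = Fin.snoc (α := fun _ => α) (Fin.insertNth i a ω) μ := by
  funext j
  rcases eq_or_ne j i.castSucc with rfl | hj
  · rw [Fin.insertNth_apply_same, Fin.snoc_castSucc, Fin.insertNth_apply_same]
  · obtain ⟨j', rfl⟩ := Fin.exists_succAbove_eq hj
    rw [Fin.insertNth_apply_succAbove]
    rcases Fin.eq_castSucc_or_eq_last j' with ⟨j'', rfl⟩ | rfl
    · rw [Fin.castSucc_succAbove_castSucc, Fin.snoc_castSucc, Fin.snoc_castSucc,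
        Fin.insertNth_apply_succAbove]
    · rw [Fin.snoc_last, Fin.succAbove_ne_last_last (Fin.castSucc_lt_last i).ne, Fin.snoc_last]

lemma aux_tensor_ext {S Ω M N : Type*} [CommRing S] [AddCommGroup Ω] [Module S Ω]
    [AddCommGroup M] [Module S M] [AddCommGroup N] [Module S N] {q : ℕ}
    {f g : ((⨂[S] (_ : Fin q), Ω) ⊗[S] M) →ₗ[S] N}
    (h : ∀ (ω : Fin q → Ω) (x : M), f ((tprod S ω) ⊗ₜ[S] x) = g ((tprod S ω) ⊗ₜ[S] x)) :
    f = g := by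
  apply TensorProduct.ext'
  intro a x
  induction a using PiTensorProduct.induction_on with
  | smul_tprod c ω => rw [← TensorProduct.smul_tmul', map_smul, map_smul, h]
  | add a b ha hb => rw [TensorProduct.add_tmul, map_add, map_add, ha, hb]


/-- The odd differential `e(x₀, x₁) = (e₁ x₁, e₀ x₀)` of a matrix factorization, as an
endomorphism of the total module `E₀ × E₁`. -/
noncomputable def mfDiff {S E₀ E₁ : Type*} [CommRing S]
    [AddCommGroup E₀] [AddCommGroup E₁] [Module S E₀] [Module S E₁]
    (e₀ : E₀ →ₗ[S] E₁) (e₁ : E₁ →ₗ[S] E₀) : (E₀ × E₁) →ₗ[S] (E₀ × E₁) :=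
  LinearMap.prod (e₁ ∘ₗ LinearMap.snd S E₀ E₁) (e₀ ∘ₗ LinearMap.fst S E₀ E₁)

/-- The pair of connections `(na₀, na₁)` on the graded components of `E`, assembled into a
map on the total module `E₀ × E₁`. -/
noncomputable def connPair {k S E₀ E₁ : Type*} [Field k] [CommRing S] [Algebra k S]
    [AddCommGroup E₀] [AddCommGroup E₁] [Module S E₀] [Module S E₁]
    [Module k E₀] [Module k E₁] [IsScalarTower k S E₀] [IsScalarTower k S E₁]
    (na₀ : E₀ →ₗ[k] (Ω[S⁄k] ⊗[S] E₀)) (na₁ : E₁ →ₗ[k] (Ω[S⁄k] ⊗[S] E₁)) :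
    (E₀ × E₁) → (Ω[S⁄k] ⊗[S] (E₀ × E₁)) :=
  fun x => (LinearMap.lTensor (Ω[S⁄k]) (LinearMap.inl S E₀ E₁)) (na₀ x.1)
    + (LinearMap.lTensor (Ω[S⁄k]) (LinearMap.inr S E₀ E₁)) (na₁ x.2)

/-- Let `(E, e)` be a matrix factorization of `w` with a connection `∇`,
and `θ = [∇, e]`.  Then for every `q ≥ 1` (stated for `q + 1`),
`(−1)^q (1_{Ω^{⊗q}} ⊗ e) ∘ θ^q − θ^q ∘ e = −B_{dw} ∘ θ^{q−1}`.
Here `θ^q` (the family `Θ`) is characterized by `Θ 0 x = 1 ⊗ x` and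
`Θ (q+1) = app ∘ (1 ⊗ θ) ∘ Θ q`, where `app` is the canonical isomorphism
`Ω^{⊗q} ⊗ (Ω ⊗ E) ≅ Ω^{⊗(q+1)} ⊗ E`, and `B_{dw}` inserts `dw` with alternating signs. -/
theorem stmt_12 {k : Type*} [Field k] [CharZero k]
    {S : Type*} [CommRing S] [Algebra k S] (w : S)
    {E₀ E₁ : Type*} [AddCommGroup E₀] [AddCommGroup E₁]
    [Module S E₀] [Module S E₁] [Module k E₀] [Module k E₁]
    [IsScalarTower k S E₀] [IsScalarTower k S E₁]
    [Module.Free S E₀] [Module.Finite S E₀] [Module.Free S E₁] [Module.Finite S E₁]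
    (e₀ : E₀ →ₗ[S] E₁) (e₁ : E₁ →ₗ[S] E₀)
    (he₀ : e₁ ∘ₗ e₀ = w • (LinearMap.id : E₀ →ₗ[S] E₀))
    (he₁ : e₀ ∘ₗ e₁ = w • (LinearMap.id : E₁ →ₗ[S] E₁))
    (na₀ : E₀ →ₗ[k] (Ω[S⁄k] ⊗[S] E₀)) (na₁ : E₁ →ₗ[k] (Ω[S⁄k] ⊗[S] E₁))
    (hna₀ : ∀ (a : S) (x : E₀),
      na₀ (a • x) = (KaehlerDifferential.D k S a) ⊗ₜ[S] x + a • na₀ x)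
    (hna₁ : ∀ (a : S) (x : E₁),
      na₁ (a • x) = (KaehlerDifferential.D k S a) ⊗ₜ[S] x + a • na₁ x)
    (θ : (E₀ × E₁) →ₗ[S] (Ω[S⁄k] ⊗[S] (E₀ × E₁)))
    (hθ : ∀ x : E₀ × E₁,
      θ x = connPair na₀ na₁ (mfDiff e₀ e₁ x)
        - (LinearMap.lTensor (Ω[S⁄k]) (mfDiff e₀ e₁)) (connPair na₀ na₁ x))
    (app : ∀ q : ℕ,
      ((⨂[S] (_ : Fin q), Ω[S⁄k]) ⊗[S] (Ω[S⁄k] ⊗[S] (E₀ × E₁))) →ₗ[S]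
        ((⨂[S] (_ : Fin (q + 1)), Ω[S⁄k]) ⊗[S] (E₀ × E₁)))
    (happ : ∀ (q : ℕ) (ω : Fin q → Ω[S⁄k]) (μ : Ω[S⁄k]) (x : E₀ × E₁),
      app q ((tprod S ω) ⊗ₜ[S] (μ ⊗ₜ[S] x)) = (PiTensorProduct.tprod S (Fin.snoc ω μ)) ⊗ₜ[S] x)
    (Θ : ∀ q : ℕ, (E₀ × E₁) →ₗ[S] ((⨂[S] (_ : Fin q), Ω[S⁄k]) ⊗[S] (E₀ × E₁)))
    (hΘ₀ : ∀ x : E₀ × E₁, Θ 0 x = (PiTensorProduct.tprod S (fun i : Fin 0 => i.elim0)) ⊗ₜ[S] x)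
    (hΘs : ∀ q : ℕ,
      Θ (q + 1) = app q ∘ₗ (LinearMap.lTensor (⨂[S] (_ : Fin q), Ω[S⁄k]) θ) ∘ₗ Θ q)
    (Bdw : ∀ q : ℕ,
      ((⨂[S] (_ : Fin q), Ω[S⁄k]) ⊗[S] (E₀ × E₁)) →ₗ[S]
        ((⨂[S] (_ : Fin (q + 1)), Ω[S⁄k]) ⊗[S] (E₀ × E₁)))
    (hBdw : ∀ (q : ℕ) (ω : Fin q → Ω[S⁄k]) (x : E₀ × E₁),
      Bdw q ((tprod S ω) ⊗ₜ[S] x)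
        = ∑ i : Fin (q + 1), ((-1 : S) ^ (i : ℕ)) •
            ((PiTensorProduct.tprod S (i.insertNth (KaehlerDifferential.D k S w) ω)) ⊗ₜ[S] x)) :
    ∀ q : ℕ,
      ((-1 : S) ^ (q + 1)) •
          ((LinearMap.lTensor (⨂[S] (_ : Fin (q + 1)), Ω[S⁄k]) (mfDiff e₀ e₁)) ∘ₗ Θ (q + 1))
        - Θ (q + 1) ∘ₗ (mfDiff e₀ e₁)
        = -(Bdw q ∘ₗ Θ q) := by
  classical
  set e := mfDiff e₀ e₁ with he_def
  set dw := KaehlerDifferential.D k S w with hdw_def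
  set dwL : (E₀ × E₁) →ₗ[S] (Ω[S⁄k] ⊗[S] (E₀ × E₁)) :=
    (TensorProduct.mk S (Ω[S⁄k]) (E₀ × E₁)) dw with hdwL_def
  have hee : ∀ x : E₀ × E₁, e (e x) = w • x := by
    intro x
    have h0 := LinearMap.congr_fun he₀ x.1
    have h1 := LinearMap.congr_fun he₁ x.2
    simp only [LinearMap.comp_apply, LinearMap.smul_apply, LinearMap.id_apply] at h0 h1
    simp only [he_def, mfDiff, LinearMap.prod_apply, Function.prod, LinearMap.comp_apply,
      LinearMap.snd_apply, LinearMap.fst_apply, h0, h1, Prod.smul_mk]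
    rfl
  have hK : ∀ x : E₀ × E₁,
      (LinearMap.lTensor (Ω[S⁄k]) e) (θ x) + θ (e x) = dwL x := by
    intro x
    have h1 : (LinearMap.lTensor (Ω[S⁄k]) e)
        ((LinearMap.lTensor (Ω[S⁄k]) e) (connPair na₀ na₁ x)) = w • connPair na₀ na₁ x := by
      rw [← LinearMap.lTensor_comp_apply, he_def]
      have : mfDiff e₀ e₁ ∘ₗ mfDiff e₀ e₁ = w • (LinearMap.id : (E₀ × E₁) →ₗ[S] (E₀ × E₁)) := by
        apply LinearMap.ext; intro y
        simpa using hee y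
      rw [this, LinearMap.lTensor_smul, LinearMap.lTensor_id]
      rfl
    have h2 : connPair na₀ na₁ (w • x) = dw ⊗ₜ[S] x + w • connPair na₀ na₁ x := by
      have hx : ((x.1 : E₀), (0 : E₁)) + ((0 : E₀), (x.2 : E₁)) = x := by
        ext <;> simp
      simp only [connPair, Prod.smul_fst, Prod.smul_snd, hna₀, hna₁, map_add, map_smul,
        LinearMap.lTensor_tmul, LinearMap.inl_apply, LinearMap.inr_apply]
      rw [smul_add]
      rw [show (dw ⊗ₜ[S] ((x.1 : E₀), (0 : E₁)) : Ω[S⁄k] ⊗[S] (E₀ × E₁))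
            + w • (LinearMap.lTensor (Ω[S⁄k]) (LinearMap.inl S E₀ E₁)) (na₀ x.1)
            + (dw ⊗ₜ[S] ((0 : E₀), (x.2 : E₁))
              + w • (LinearMap.lTensor (Ω[S⁄k]) (LinearMap.inr S E₀ E₁)) (na₁ x.2))
          = (dw ⊗ₜ[S] ((x.1 : E₀), (0 : E₁)) + dw ⊗ₜ[S] ((0 : E₀), (x.2 : E₁)))
            + (w • (LinearMap.lTensor (Ω[S⁄k]) (LinearMap.inl S E₀ E₁)) (na₀ x.1)
              + w • (LinearMap.lTensor (Ω[S⁄k]) (LinearMap.inr S E₀ E₁)) (na₁ x.2)) from by abel]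
      rw [← TensorProduct.tmul_add, hx]
    rw [hθ x, hθ (e x), map_sub, h1, hee x, h2]
    simp only [hdwL_def, TensorProduct.mk_apply]
    abel
  have hKmap : (LinearMap.lTensor (Ω[S⁄k]) e) ∘ₗ θ = dwL - θ ∘ₗ e := by
    apply LinearMap.ext; intro x
    simp only [LinearMap.comp_apply, LinearMap.sub_apply]
    rw [eq_sub_iff_add_eq]
    exact hK x
  have hcomm : ∀ m : ℕ,
      (LinearMap.lTensor (⨂[S] (_ : Fin (m + 1)), Ω[S⁄k]) e) ∘ₗ app m
        = app m ∘ₗ (LinearMap.lTensor (⨂[S] (_ : Fin m), Ω[S⁄k])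
            (LinearMap.lTensor (Ω[S⁄k]) e)) := by
    intro m
    apply aux_tensor_ext
    intro ω t
    simp only [LinearMap.comp_apply]
    induction t using TensorProduct.induction_on with
    | zero => simp
    | tmul μ x => simp [happ, LinearMap.lTensor_tmul]
    | add t₁ t₂ h₁ h₂ =>
        simp only [TensorProduct.tmul_add, map_add, h₁, h₂]
  have hcomm' : ∀ (m : ℕ) (t : (⨂[S] (_ : Fin m), Ω[S⁄k]) ⊗[S] (Ω[S⁄k] ⊗[S] (E₀ × E₁))),
      (LinearMap.lTensor (⨂[S] (_ : Fin (m + 1)), Ω[S⁄k]) e) (app m t)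
        = app m ((LinearMap.lTensor (⨂[S] (_ : Fin m), Ω[S⁄k])
            (LinearMap.lTensor (Ω[S⁄k]) e)) t) := by
    intro m t
    simpa only [LinearMap.comp_apply] using LinearMap.congr_fun (hcomm m) t
  have hC : ∀ m : ℕ,
      Bdw (m + 1) ∘ₗ app m ∘ₗ (LinearMap.lTensor (⨂[S] (_ : Fin m), Ω[S⁄k]) θ)
        = app (m + 1) ∘ₗ (LinearMap.lTensor (⨂[S] (_ : Fin (m + 1)), Ω[S⁄k]) θ) ∘ₗ Bdw m
          + ((-1 : S) ^ (m + 1)) •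
              (app (m + 1) ∘ₗ (LinearMap.lTensor (⨂[S] (_ : Fin (m + 1)), Ω[S⁄k]) dwL)
                ∘ₗ app m ∘ₗ (LinearMap.lTensor (⨂[S] (_ : Fin m), Ω[S⁄k]) θ)) := by
    intro m
    apply aux_tensor_ext
    intro ω x
    simp only [LinearMap.comp_apply, LinearMap.add_apply, LinearMap.smul_apply,
      LinearMap.lTensor_tmul]
    rw [hBdw m ω x, map_sum]
    simp only [map_smul, LinearMap.lTensor_tmul]
    generalize θ x = t
    induction t using TensorProduct.induction_on with
    | zero => simp
    | tmul μ y =>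
      rw [happ m ω μ y, hBdw (m + 1) (Fin.snoc ω μ) y, map_sum]
      simp only [map_smul, happ, LinearMap.lTensor_tmul, TensorProduct.mk_apply]
      rw [Fin.sum_univ_castSucc]
      congr 1
      · apply Finset.sum_congr rfl
        intro i _
        rw [Fin.coe_castSucc, aux_insertNth_castSucc_snoc]
      · rw [Fin.val_last, Fin.insertNth_last', hdwL_def, TensorProduct.mk_apply,
          happ (m + 1) (Fin.snoc ω μ) dw y]
    | add t₁ t₂ h₁ h₂ =>
      simp only [TensorProduct.tmul_add, map_add, smul_add, Finset.sum_add_distrib] at h₁ h₂ ⊢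
      rw [h₁, h₂]
      abel
  intro q
  induction q with
  | zero =>
    rw [hΘs 0]
    apply LinearMap.ext; intro x
    simp only [LinearMap.sub_apply, LinearMap.smul_apply, LinearMap.comp_apply,
      LinearMap.neg_apply]
    rw [hcomm' 0 ((LinearMap.lTensor (⨂[S] (_ : Fin 0), Ω[S⁄k]) θ) ((Θ 0) x))]
    rw [hΘ₀ x, hΘ₀ (e x)]
    simp only [LinearMap.lTensor_tmul]
    rw [pow_one, neg_one_smul, sub_eq_add_neg, ← neg_add, ← map_add,
      ← TensorProduct.tmul_add, hK x]
    rw [hBdw 0]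
    rw [hdwL_def, TensorProduct.mk_apply, happ 0 _ dw x]
    rw [Fin.sum_univ_one]
    rw [show ((0 : Fin 1).insertNth dw (fun i : Fin 0 => i.elim0))
        = Fin.snoc (α := fun _ => Ω[S⁄k]) (fun i : Fin 0 => i.elim0) dw from
      Fin.insertNth_last' dw _]
    norm_num
  | succ q ih =>
    have hs : ((-1 : S) ^ (q + 1)) * ((-1 : S) ^ (q + 1)) = 1 := by
      rw [← pow_add]; exact Even.neg_one_pow ⟨q + 1, rfl⟩
    rw [hΘs (q + 1)]
    apply LinearMap.ext; intro x
    have ihx := LinearMap.congr_fun ih x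
    simp only [LinearMap.sub_apply, LinearMap.smul_apply, LinearMap.comp_apply,
      LinearMap.neg_apply] at ihx ⊢
    have hIH' : (LinearMap.lTensor (⨂[S] (_ : Fin (q + 1)), Ω[S⁄k]) e) ((Θ (q + 1)) x)
        = ((-1 : S) ^ (q + 1)) • (Θ (q + 1)) (e x)
          - ((-1 : S) ^ (q + 1)) • (Bdw q) ((Θ q) x) := by
      have h2 := congrArg (fun t => ((-1 : S) ^ (q + 1)) • t) ihx
      simp only [smul_sub, smul_neg, smul_smul, hs, one_smul] at h2
      rw [sub_eq_iff_eq_add] at h2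
      rw [h2]; abel
    have hz : (Θ (q + 1)) x
        = app q ((LinearMap.lTensor (⨂[S] (_ : Fin q), Ω[S⁄k]) θ) ((Θ q) x)) := by
      rw [hΘs q]; rfl
    have hB := LinearMap.congr_fun (hC q) ((Θ q) x)
    simp only [LinearMap.comp_apply, LinearMap.add_apply, LinearMap.smul_apply] at hB
    rw [← hz] at hB
    have hA : (LinearMap.lTensor (⨂[S] (_ : Fin (q + 1 + 1)), Ω[S⁄k]) e)
          ((app (q + 1)) ((LinearMap.lTensor (⨂[S] (_ : Fin (q + 1)), Ω[S⁄k]) θ)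
            ((Θ (q + 1)) x)))
        = (app (q + 1)) ((LinearMap.lTensor (⨂[S] (_ : Fin (q + 1)), Ω[S⁄k]) dwL)
            ((Θ (q + 1)) x))
          - (app (q + 1)) ((LinearMap.lTensor (⨂[S] (_ : Fin (q + 1)), Ω[S⁄k]) θ)
            ((LinearMap.lTensor (⨂[S] (_ : Fin (q + 1)), Ω[S⁄k]) e) ((Θ (q + 1)) x))) := by
      rw [hcomm' (q + 1) ((LinearMap.lTensor (⨂[S] (_ : Fin (q + 1)), Ω[S⁄k]) θ)
        ((Θ (q + 1)) x))]
      rw [← LinearMap.lTensor_comp_apply, hKmap, LinearMap.lTensor_sub]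
      rw [← LinearMap.lTensor_comp_apply, ← map_sub]
      rfl
    rw [hA, hIH', hB]
    simp only [map_sub, map_smul, smul_sub]
    have h1 : (-1 : S) ^ (q + 1 + 1) = -(-1 : S) ^ (q + 1) := by rw [pow_succ, mul_neg_one]
    have h2 : (-1 : S) ^ (q + 1 + 1) * (-1 : S) ^ (q + 1) = -1 := by
      rw [h1, neg_mul, hs]
    match_scalars
    · rw [mul_one, mul_one, h1]
    · rw [mul_one, h2]; ring
    · rw [mul_one, h2]; ring
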